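/- Let b > 0 and 0 < δ < 1. Set P = {b² − z² : z ∈ ℂ, |Re z| ≤ bδ} and Ω = {w ∈ interior(P) : Im w < 0}. Then every w ∈ Ω satisfies Im(w − b²) < 0 (so the principal branch of the square root is holomorphic at w − b²), and the map h(w) = i b⁻¹ √(w − b²) is a holomorphic bijection from Ω onto the strip {ζ ∈ ℂ : 0 < Re ζ < δ and Im ζ > 0}. -/

import Mathlib

open Set Complex

set_option maxHeartbeats 2000000

lemma mk_eq (b x y : ℝ) (w : ℂ) (h1 : w.re = b*b - (x*x - y*y)) (h2 : w.im = -(2*(x*y))) :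
    w = (b:ℂ)^2 - ((x:ℂ) + (y:ℂ)*Complex.I)^2 := by
  apply Complex.ext
  · simp [pow_two, Complex.sub_re, Complex.mul_re, Complex.add_re, Complex.add_im, Complex.mul_im, h1]
  · simp [pow_two, Complex.sub_im, Complex.mul_re, Complex.add_re, Complex.add_im, Complex.mul_im, h2]
    ring

/-- P is contained in the closed parabolic region. -/
lemma P_subset_closed (b δ : ℝ) (hb : 0 < b) (hδ0 : 0 < δ) (z : ℂ)
    (hz : |z.re| ≤ b * δ) :
    b^2*(1-δ^2) + (((b:ℂ)^2 - z^2).im)^2/(4*b^2*δ^2) ≤ ((b:ℂ)^2 - z^2).re := by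
  have hD : (0:ℝ) < 4*b^2*δ^2 := by positivity
  have hzeq : z = (z.re:ℂ) + (z.im:ℂ)*Complex.I := (Complex.re_add_im z).symm
  have hre : ((b:ℂ)^2 - z^2).re = b*b - (z.re*z.re - z.im*z.im) := by
    rw [hzeq]
    simp [pow_two, Complex.sub_re, Complex.mul_re, Complex.add_re, Complex.add_im, Complex.mul_im]
  have him : ((b:ℂ)^2 - z^2).im = -(2*(z.re*z.im)) := by
    rw [hzeq]
    simp [pow_two, Complex.sub_im, Complex.mul_re, Complex.add_re, Complex.add_im, Complex.mul_im]
    ring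
  rw [hre, him]
  obtain ⟨hz1, hz2⟩ := abs_le.mp hz
  have hx2 : z.re^2 ≤ (b*δ)^2 := sq_le_sq' hz1 hz2
  have h1 : (-(2*(z.re*z.im)))^2 / (4*b^2*δ^2)
      ≤ (b*b - (z.re*z.re - z.im*z.im)) - b^2*(1-δ^2) := by
    rw [div_le_iff₀ hD]
    nlinarith [sq_nonneg z.im, hx2, sq_nonneg (z.re*z.im)]
  linarith

/-- Every point of the closed parabolic region lies in P. -/
lemma closed_subset_P (b δ : ℝ) (hb : 0 < b) (hδ0 : 0 < δ) (w : ℂ)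
    (hw : b^2*(1-δ^2) + w.im^2/(4*b^2*δ^2) ≤ w.re) :
    ∃ z : ℂ, |z.re| ≤ b * δ ∧ w = (b:ℂ)^2 - z^2 := by
  have hD : (0:ℝ) < 4*b^2*δ^2 := by positivity
  have h1 : w.im^2/(4*b^2*δ^2) ≤ w.re - b^2*(1-δ^2) := by linarith
  have h2 : w.im^2 ≤ (w.re - b^2*(1-δ^2)) * (4*b^2*δ^2) := (div_le_iff₀ hD).mp h1
  set p := w.re with hp
  set q := w.im with hq
  set A := b^2 - p with hA
  obtain ⟨r, hr0, hr2⟩ : ∃ r : ℝ, 0 ≤ r ∧ r^2 = A^2 + q^2 :=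
    ⟨Real.sqrt (A^2 + q^2), Real.sqrt_nonneg _, Real.sq_sqrt (by positivity)⟩
  clear_value p q A
  have hAB : A ≤ b^2*δ^2 := by nlinarith [sq_nonneg q]
  have hBA0 : 0 ≤ 2*b^2*δ^2 - A := by nlinarith
  have hBA : r ≤ 2*b^2*δ^2 - A := by
    nlinarith [sq_nonneg (2*b^2*δ^2 - A - r), sq_nonneg (2*b^2*δ^2 - A + r)]
  by_cases hx : 0 < r + A
  · obtain ⟨x, hx0, hx2⟩ : ∃ x : ℝ, 0 < x ∧ x^2 = (r+A)/2 :=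
      ⟨Real.sqrt ((r+A)/2), Real.sqrt_pos.mpr (by linarith), Real.sq_sqrt (by linarith)⟩
    set y := -q/(2*x) with hy
    clear_value y
    have hq2 : q^2 = (r-A)*(r+A) := by nlinarith
    have hyy : y^2 = q^2/(4*x^2) := by
      rw [hy, div_pow]; ring
    have hy2 : y^2 = (r-A)/2 := by
      rw [hyy, hx2, hq2, show (4:ℝ)*((r+A)/2) = 2*(r+A) by ring,
        div_eq_div_iff (by linarith) (by norm_num : (2:ℝ) ≠ 0)]
      ring
    refine ⟨(x:ℂ) + (y:ℂ)*Complex.I, ?_, mk_eq b x y w ?_ ?_⟩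
    · have hxle : x ≤ b*δ := by
        nlinarith [hx2, hBA, mul_pos hb hδ0]
      have hre : ((x:ℂ) + (y:ℂ)*Complex.I).re = x := by simp
      rw [hre, abs_of_pos hx0]
      exact hxle
    · rw [← hp]
      nlinarith [hx2, hy2]
    · rw [← hq, hy]
      field_simp
  · push_neg at hx
    have hA0 : A ≤ 0 := by nlinarith
    have hq0 : q = 0 := by nlinarith
    obtain ⟨s, hs2⟩ : ∃ s : ℝ, s^2 = -A := ⟨Real.sqrt (-A), Real.sq_sqrt (by linarith)⟩
    refine ⟨(0:ℂ) + (s:ℂ)*Complex.I, ?_, mk_eq b 0 s w ?_ ?_⟩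
    · have hre : ((0:ℂ) + (s:ℂ)*Complex.I).re = 0 := by simp
      rw [hre, abs_zero]
      positivity
    · rw [← hp]
      nlinarith
    · rw [← hq, hq0]
      ring

/-- Principal square root facts for points in the lower half plane. -/
lemma sqrt_facts (c : ℂ) (hc : c.im < 0) :
    0 < (c ^ ((1:ℂ)/2)).re ∧ (c ^ ((1:ℂ)/2)).im < 0 ∧ (c ^ ((1:ℂ)/2)) ^ 2 = c := by
  have hc0 : c ≠ 0 := by
    intro h; rw [h] at hc; simp at hc
  have harg0 : Complex.arg c < 0 := Complex.arg_neg_iff.mpr hc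
  have hargpi : -Real.pi < Complex.arg c := Complex.neg_pi_lt_arg c
  have hpi : 0 < Real.pi := Real.pi_pos
  have hdef : c ^ ((1:ℂ)/2) = Complex.exp (Complex.log c * ((1:ℂ)/2)) :=
    Complex.cpow_def_of_ne_zero hc0 _
  have him2 : (Complex.log c * ((1:ℂ)/2)).im = Complex.arg c / 2 := by
    simp [Complex.mul_im, Complex.log_im]
    ring
  have hre2 : (Complex.log c * ((1:ℂ)/2)).re = (Complex.log c).re / 2 := by
    simp [Complex.mul_re]
    ring
  have hcos : 0 < Real.cos (Complex.arg c / 2) :=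
    Real.cos_pos_of_mem_Ioo ⟨by linarith, by linarith⟩
  have hsin : Real.sin (Complex.arg c / 2) < 0 :=
    Real.sin_neg_of_neg_of_neg_pi_lt (by linarith) (by linarith)
  refine ⟨?_, ?_, ?_⟩
  · rw [hdef, Complex.exp_re, him2, hre2]
    positivity
  · rw [hdef, Complex.exp_im, him2, hre2]
    exact mul_neg_of_pos_of_neg (Real.exp_pos _) hsin
  · have h12 : (1:ℂ)/2 = ((2:ℕ):ℂ)⁻¹ := by norm_num
    rw [h12]
    exact Complex.cpow_nat_inv_pow c two_ne_zero

/-- Interior of P is the open parabolic region. -/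
lemma interior_P (b δ : ℝ) (hb : 0 < b) (hδ0 : 0 < δ)
    (P : Set ℂ) (hP : P = {w : ℂ | ∃ z : ℂ, |z.re| ≤ b * δ ∧ w = (b : ℂ) ^ 2 - z ^ 2}) :
    interior P = {w : ℂ | b^2*(1-δ^2) + w.im^2/(4*b^2*δ^2) < w.re} := by
  apply Subset.antisymm
  · intro w hw
    obtain ⟨ε, hε, hball⟩ := Metric.mem_nhds_iff.mp (mem_interior_iff_mem_nhds.mp hw)
    have hmem : w - ((ε/2 : ℝ):ℂ) ∈ P := by
      apply hball
      simp only [Metric.mem_ball, Complex.dist_eq]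
      rw [show w - ((ε/2 : ℝ):ℂ) - w = -((ε/2 : ℝ):ℂ) by ring]
      rw [norm_neg, Complex.norm_real, Real.norm_eq_abs, abs_of_pos (by linarith)]
      linarith
    rw [hP] at hmem
    obtain ⟨z, hz, hzeq⟩ := hmem
    have hle := P_subset_closed b δ hb hδ0 z hz
    rw [← hzeq] at hle
    have hre : (w - ((ε/2 : ℝ):ℂ)).re = w.re - ε/2 := by simp
    have him : (w - ((ε/2 : ℝ):ℂ)).im = w.im := by simp
    rw [hre, him] at hle
    show b^2*(1-δ^2) + w.im^2/(4*b^2*δ^2) < w.re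
    linarith
  · apply interior_maximal
    · intro w hw
      rw [hP]
      exact closed_subset_P b δ hb hδ0 w (le_of_lt hw)
    · have : IsOpen {w : ℂ | b^2*(1-δ^2) + w.im^2/(4*b^2*δ^2) < w.re} :=
        isOpen_lt (by fun_prop) Complex.continuous_re
      exact this

lemma Ib_re (b : ℝ) (s : ℂ) : (Complex.I * (b:ℂ)⁻¹ * s).re = -(b⁻¹ * s.im) := by
  rw [← Complex.ofReal_inv]
  simp [Complex.mul_re, Complex.mul_im]

lemma Ib_im (b : ℝ) (s : ℂ) : (Complex.I * (b:ℂ)⁻¹ * s).im = b⁻¹ * s.re := by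
  rw [← Complex.ofReal_inv]
  simp [Complex.mul_re, Complex.mul_im]

lemma plus_re (b x y : ℝ) :
    ((b:ℂ)^2 + ((x:ℂ) + (y:ℂ)*Complex.I)^2).re = b*b + (x*x - y*y) := by
  simp [pow_two, Complex.add_re, Complex.mul_re, Complex.add_im, Complex.mul_im]

lemma plus_im (b x y : ℝ) :
    ((b:ℂ)^2 + ((x:ℂ) + (y:ℂ)*Complex.I)^2).im = 2*(x*y) := by
  simp [pow_two, Complex.add_im, Complex.mul_re, Complex.add_re, Complex.mul_im]
  ring

/-- The principal square root maps the lower part of the interior of the shifted parabolic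
region `P = {b² − z² : |Re z| ≤ bδ}` biholomorphically onto a strip: on
`Ω = {w ∈ int P : Im w < 0}` one has `Im(w − b²) < 0`, and
`h(w) = i b⁻¹ (w − b²)^{1/2}` is a holomorphic bijection from `Ω` onto
`{ζ : 0 < Re ζ < δ, Im ζ > 0}`. -/
theorem parabolic_region_maps_to_strip
    (b δ : ℝ) (hb : 0 < b) (hδ0 : 0 < δ) (hδ1 : δ < 1)
    (P : Set ℂ) (hP : P = {w : ℂ | ∃ z : ℂ, |z.re| ≤ b * δ ∧ w = (b : ℂ) ^ 2 - z ^ 2})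
    (Ω : Set ℂ) (hΩ : Ω = {w ∈ interior P | w.im < 0})
    (h : ℂ → ℂ)
    (hh : h = fun w : ℂ => Complex.I * (b : ℂ)⁻¹ * (w - (b : ℂ) ^ 2) ^ ((1 : ℂ) / 2)) :
    (∀ w ∈ Ω, (w - (b : ℂ) ^ 2).im < 0) ∧
    DifferentiableOn ℂ h Ω ∧
    Set.BijOn h Ω {ζ : ℂ | 0 < ζ.re ∧ ζ.re < δ ∧ 0 < ζ.im} := by
  have hD : (0:ℝ) < 4*b^2*δ^2 := by positivity
  have hbδ : 0 < b*δ := mul_pos hb hδ0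
  have hIntP := interior_P b δ hb hδ0 P hP
  have hsubim : ∀ w : ℂ, (w - (b:ℂ)^2).im = w.im := by
    intro w; simp [pow_two]
  have hΩmem : ∀ w : ℂ, w ∈ Ω ↔
      (b^2*(1-δ^2) + w.im^2/(4*b^2*δ^2) < w.re ∧ w.im < 0) := by
    intro w
    rw [hΩ, Set.mem_sep_iff, hIntP]
    rfl
  have part1 : ∀ w ∈ Ω, (w - (b : ℂ) ^ 2).im < 0 := by
    intro w hw
    rw [hsubim]
    exact ((hΩmem w).mp hw).2
  refine ⟨part1, ?_, ?_, ?_, ?_⟩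
  · -- differentiability
    intro w hw
    apply DifferentiableAt.differentiableWithinAt
    rw [hh]
    apply DifferentiableAt.const_mul
    apply DifferentiableAt.cpow (differentiableAt_id.sub (differentiableAt_const _))
      (differentiableAt_const _)
    right
    show (w - (b:ℂ)^2).im ≠ 0
    exact ne_of_lt (part1 w hw)
  · -- MapsTo
    intro w hw
    obtain ⟨hwlt, hwim⟩ := (hΩmem w).mp hw
    obtain ⟨hsre, hsim, hs2⟩ := sqrt_facts (w - (b:ℂ)^2) (part1 w hw)
    set s := (w - (b:ℂ)^2) ^ ((1:ℂ)/2) with hsdef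
    have hhw : h w = Complex.I * (b:ℂ)⁻¹ * s := by rw [hh]
    have hwre : w.re = b^2 + (s.re*s.re - s.im*s.im) := by
      have h2re : (s^2).re = s.re*s.re - s.im*s.im := by simp [pow_two, Complex.mul_re]
      have hcre : (w - (b:ℂ)^2).re = w.re - b^2 := by simp [pow_two, Complex.mul_re]
      rw [hs2, hcre] at h2re
      linarith
    have hwim2 : w.im = 2*(s.re*s.im) := by
      have h2im : (s^2).im = s.re*s.im + s.im*s.re := by simp [pow_two, Complex.mul_im]
      rw [hs2, hsubim] at h2im
      linarith
    have hq : w.im^2 < (w.re - b^2*(1-δ^2)) * (4*b^2*δ^2) :=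
      (div_lt_iff₀ hD).mp (by linarith)
    have hbound : s.im^2 < (b*δ)^2 := by
      rw [hwim2, hwre] at hq
      nlinarith [sq_nonneg s.re, sq_nonneg s.im, mul_pos hb hδ0, sq_nonneg (s.re*s.im)]
    have hsimgt : -(b*δ) < s.im := by nlinarith
    show 0 < (h w).re ∧ (h w).re < δ ∧ 0 < (h w).im
    rw [hhw, Ib_re, Ib_im]
    have hbinv : 0 < b⁻¹ := inv_pos.mpr hb
    refine ⟨?_, ?_, ?_⟩
    · nlinarith [mul_pos hbinv (neg_pos.mpr hsim)]
    · nlinarith [mul_pos hbinv (show 0 < b*δ + s.im by linarith),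
        mul_inv_cancel₀ (ne_of_gt hb)]
    · exact mul_pos hbinv hsre
  · -- InjOn
    intro w hw w' hw' heq
    obtain ⟨_, _, hs2⟩ := sqrt_facts (w - (b:ℂ)^2) (part1 w hw)
    obtain ⟨_, _, hs2'⟩ := sqrt_facts (w' - (b:ℂ)^2) (part1 w' hw')
    rw [hh] at heq
    simp only at heq
    have hne : Complex.I * (b:ℂ)⁻¹ ≠ 0 :=
      mul_ne_zero Complex.I_ne_zero (inv_ne_zero (Complex.ofReal_ne_zero.mpr (ne_of_gt hb)))
    have hss : (w - (b:ℂ)^2) ^ ((1:ℂ)/2) = (w' - (b:ℂ)^2) ^ ((1:ℂ)/2) :=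
      mul_left_cancel₀ hne heq
    have : w - (b:ℂ)^2 = w' - (b:ℂ)^2 := by
      rw [← hs2, ← hs2', hss]
    exact sub_left_inj.mp this
  · -- SurjOn
    intro ζ hζ
    obtain ⟨hu0, huδ, hv0⟩ := hζ
    set u := ζ.re with hu
    set v := ζ.im with hv
    set z : ℂ := ((b*v : ℝ):ℂ) + ((-(b*u) : ℝ):ℂ)*Complex.I with hzdef
    set w : ℂ := (b:ℂ)^2 + z^2 with hwdef
    have hzre : z.re = b*v := by simp [hzdef]
    have hzim : z.im = -(b*u) := by simp [hzdef]
    have hwre : w.re = b*b + ((b*v)*(b*v) - (b*u)*(b*u)) := by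
      rw [hwdef, hzdef, plus_re]; ring
    have hwim : w.im = 2*((b*v)*(-(b*u))) := by
      rw [hwdef, hzdef, plus_im]
    have hbu : 0 < b*u := mul_pos hb hu0
    have hbv : 0 < b*v := mul_pos hb hv0
    have hwim0 : w.im < 0 := by
      rw [hwim]; nlinarith [mul_pos hbv hbu]
    have hkey : u^2 < δ^2 := by nlinarith
    have hkey2 : (0:ℝ) < (δ^2 - u^2)*(δ^2 + v^2) :=
      mul_pos (by linarith) (by positivity)
    have hwΩ : w ∈ Ω := by
      rw [hΩmem]
      refine ⟨?_, hwim0⟩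
      have hlt : w.im^2 < (w.re - b^2*(1-δ^2)) * (4*b^2*δ^2) := by
        rw [hwre, hwim]
        nlinarith [hkey2, pow_pos hb 4, sq_nonneg (b*u*v), pow_pos hb 2]
      have := (div_lt_iff₀ hD).mpr hlt
      linarith
    refine ⟨w, hwΩ, ?_⟩
    obtain ⟨hsre, hsim, hs2⟩ := sqrt_facts (w - (b:ℂ)^2) (part1 w hwΩ)
    set s := (w - (b:ℂ)^2) ^ ((1:ℂ)/2) with hsdef
    have hz2 : z^2 = w - (b:ℂ)^2 := by rw [hwdef]; ring
    have hfact : (s - z)*(s + z) = 0 := by linear_combination hs2 - hz2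
    have hsz : s = z := by
      rcases mul_eq_zero.mp hfact with h1 | h1
      · exact sub_eq_zero.mp h1
      · exfalso
        have hsneg : s = -z := eq_neg_of_add_eq_zero_left h1
        have hsre2 : s.re = -(b*v) := by rw [hsneg, Complex.neg_re, hzre]
        linarith
    rw [hh]
    show Complex.I * (b:ℂ)⁻¹ * (w - (b:ℂ)^2) ^ ((1:ℂ)/2) = ζ
    rw [← hsdef, hsz]
    apply Complex.ext
    · rw [Ib_re, hzim, ← hu]
      field_simp
    · rw [Ib_im, hzre, ← hv]
      field_simp
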